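/- For a pure sequence of actions K = α₁.….αₙ.end, the block ⟨K⟩_{σ;ε} evaluates to ⟨end⟩_{σ;δ} with R(δ) = R(K) and W(δ) = W(K) if and only if R(K) ⊆ σ; otherwise it evaluates to a retry state. -/

import Mathlib

/-- Actions: reads and writes of names. -/
inductive Act (N : Type*) where
  | rd (a : N)
  | wt (a : N)

/-- Multiset of names written in a log. -/
def Wl {N : Type*} : List (Act N) → Multiset N
  | [] => 0
  | .wt a :: δ => Wl δ + {a}
  | .rd _ :: δ => Wl δ

/-- Multiset of names read in a log. -/
def Rl {N : Type*} : List (Act N) → Multiset N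
  | [] => 0
  | .rd a :: δ => Rl δ + {a}
  | .wt _ :: δ => Rl δ

/-- Atomic expressions. -/
inductive Expr (N : Type*) where
  | done
  | retry
  | rd (a : N) (M : Expr N)
  | wt (a : N) (M : Expr N)
  | orElse (M₁ M₂ : Expr N)

/-- Ongoing atomic expressions. -/
inductive Ong (N : Type*) where
  | block (M : Expr N) (σ : Multiset N) (δ : List (Act N))
  | orElse (A B : Ong N)

/-- One-step reduction of ongoing expressions. -/
inductive Step {N : Type*} : Ong N → Ong N → Prop where
  | rdOk {a : N} {M σ δ} (h : Rl δ + {a} ≤ σ) :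
      Step (.block (.rd a M) σ δ) (.block M σ (δ ++ [.rd a]))
  | rdFail {a : N} {M σ δ} (h : ¬ Rl δ + {a} ≤ σ) :
      Step (.block (.rd a M) σ δ) (.block .retry σ δ)
  | wr {a : N} {M σ δ} :
      Step (.block (.wt a M) σ δ) (.block M σ (δ ++ [.wt a]))
  | orE {M₁ M₂ : Expr N} {σ δ} :
      Step (.block (.orElse M₁ M₂) σ δ) (.orElse (.block M₁ σ δ) (.block M₂ σ δ))
  | orFail {σ : Multiset N} {δ B} : Step (.orElse (.block .retry σ δ) B) B
  | orEnd {σ : Multiset N} {δ B} : Step (.orElse (.block .done σ δ) B) (.block .done σ δ)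
  | congL {A A' B : Ong N} (h : Step A A') : Step (.orElse A B) (.orElse A' B)
  | congR {A B B' : Ong N} (h : Step B B') : Step (.orElse A B) (.orElse A B')

/-- Multi-step reduction. -/
def Steps {N : Type*} : Ong N → Ong N → Prop := Relation.ReflTransGen Step

/-- Logs with the same effect on state σ. -/
def EffEq {N : Type*} [DecidableEq N] (σ : Multiset N) (δ δ' : List (Act N)) : Prop :=
  σ - Rl δ + Wl δ = σ - Rl δ' + Wl δ'

/-- Weak atomic equivalence. -/
def AEq {N : Type*} [DecidableEq N] (M M' : Expr N) : Prop :=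
  ∀ σ : Multiset N,
    ((∃ δ, Steps (.block M σ []) (.block .retry σ δ)) ∧
     (∃ δ', Steps (.block M' σ []) (.block .retry σ δ'))) ∨
    (∃ δ δ', Steps (.block M σ []) (.block .done σ δ) ∧
             Steps (.block M' σ []) (.block .done σ δ') ∧ EffEq σ δ δ')

/-- Prefixing an action onto an expression. -/
def pre {N : Type*} : Act N → Expr N → Expr N
  | .rd a, M => .rd a M
  | .wt a, M => .wt a M

/-- The pure sequence expression α₁.….αₙ.end. -/
def seq {N : Type*} (K : List (Act N)) : Expr N := K.foldr pre .done

/-- Right-nested orElse of a nonempty list of expressions. -/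
def ors {N : Type*} : Expr N → List (Expr N) → Expr N
  | M, [] => M
  | M, M' :: rest => .orElse M (ors M' rest)


section Aux
variable {N : Type*}

lemma Rl_append (δ δ' : List (Act N)) : Rl (δ ++ δ') = Rl δ + Rl δ' := by
  induction δ with
  | nil => simp [Rl]
  | cons a δ ih => cases a <;> simp [Rl, ih] <;> abel

/-- no orElse inside -/
def NoOr : Expr N → Prop
  | .orElse _ _ => False
  | .rd _ M => NoOr M
  | .wt _ M => NoOr M
  | _ => True

lemma noOr_seq (K : List (Act N)) : NoOr (seq K) := by
  induction K with
  | nil => trivial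
  | cons a K ih => cases a <;> simpa [seq, pre, NoOr] using ih

lemma steps_seq_done (σ : Multiset N) :
    ∀ (K : List (Act N)) (δ : List (Act N)), Rl δ + Rl K ≤ σ →
      Steps (.block (seq K) σ δ) (.block .done σ (δ ++ K)) := by
  intro K
  induction K with
  | nil => intro δ h; simp [seq]; exact Relation.ReflTransGen.refl
  | cons a K ih =>
    intro δ h
    cases a with
    | rd a =>
      have h1 : Rl δ + {a} ≤ σ := by
        refine le_trans ?_ h
        simp [Rl]
      refine Relation.ReflTransGen.head (Step.rdOk h1) ?_
      have h2 : Rl (δ ++ [Act.rd a]) + Rl K ≤ σ := by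
        have : Rl (δ ++ [Act.rd a]) + Rl K = Rl δ + Rl (Act.rd a :: K) := by
          simp [Rl_append, Rl]; abel
        rw [this]; exact h
      have := ih (δ ++ [Act.rd a]) h2
      simpa [seq, pre, Steps] using this
    | wt a =>
      refine Relation.ReflTransGen.head Step.wr ?_
      have h2 : Rl (δ ++ [Act.wt a]) + Rl K ≤ σ := by
        have : Rl (δ ++ [Act.wt a]) + Rl K = Rl δ + Rl (Act.wt a :: K) := by
          simp [Rl_append, Rl]
        rw [this]; exact h
      have := ih (δ ++ [Act.wt a]) h2
      simpa [seq, pre, Steps] using this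

lemma steps_seq_retry (σ : Multiset N) :
    ∀ (K : List (Act N)) (δ : List (Act N)), Rl δ ≤ σ → ¬ Rl δ + Rl K ≤ σ →
      ∃ δ', Steps (.block (seq K) σ δ) (.block .retry σ δ') := by
  intro K
  induction K with
  | nil => intro δ h1 h2; exact absurd (by simpa [Rl] using h1) h2
  | cons a K ih =>
    intro δ h1 h2
    cases a with
    | rd a =>
      by_cases hc : Rl δ + {a} ≤ σ
      · have h2' : ¬ Rl (δ ++ [Act.rd a]) + Rl K ≤ σ := by
          have : Rl (δ ++ [Act.rd a]) + Rl K = Rl δ + Rl (Act.rd a :: K) := by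
            simp [Rl_append, Rl]; abel
          rw [this]; exact h2
        obtain ⟨δ', hδ'⟩ := ih (δ ++ [Act.rd a]) (by simpa [Rl_append, Rl] using hc) h2'
        exact ⟨δ', Relation.ReflTransGen.head (Step.rdOk hc) (by simpa [seq, pre, Steps] using hδ')⟩
      · exact ⟨δ, Relation.ReflTransGen.single (Step.rdFail hc)⟩
    | wt a =>
      have h2' : ¬ Rl (δ ++ [Act.wt a]) + Rl K ≤ σ := by
        have : Rl (δ ++ [Act.wt a]) + Rl K = Rl δ + Rl (Act.wt a :: K) := by
          simp [Rl_append, Rl]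
        rw [this]; exact h2
      obtain ⟨δ', hδ'⟩ := ih (δ ++ [Act.wt a]) (by simpa [Rl_append, Rl] using h1) h2'
      exact ⟨δ', Relation.ReflTransGen.head Step.wr (by simpa [seq, pre, Steps] using hδ')⟩

/-- PureInvariant: reachable states from a pure block keep reads ≤ σ. -/
def PureInv (σ : Multiset N) (s : Ong N) : Prop :=
  ∃ M δ, s = Ong.block M σ δ ∧ NoOr M ∧ Rl δ ≤ σ

lemma inv_step {σ : Multiset N} {s t : Ong N} (h : Step s t) (hs : PureInv σ s) : PureInv σ t := by
  obtain ⟨M, δ, rfl, hno, hle⟩ := hs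
  cases h with
  | rdOk h => exact ⟨_, _, rfl, hno, by simpa [Rl_append, Rl] using h⟩
  | rdFail h => exact ⟨_, _, rfl, trivial, hle⟩
  | wr => exact ⟨_, _, rfl, hno, by simpa [Rl_append, Rl] using hle⟩
  | orE => exact absurd hno (by simp [NoOr])

lemma inv_steps {σ : Multiset N} {s t : Ong N} (h : Steps s t) (hs : PureInv σ s) : PureInv σ t := by
  induction h with
  | refl => exact hs
  | tail _ hstep ih => exact inv_step hstep ih

end Aux

/-- A pure sequence K = α₁.….αₙ.end evaluates from ⟨K⟩_{σ;ε} to an end-state whose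
log has reads R(K) and writes W(K) iff R(K) ⊆ σ; otherwise it evaluates to a
retry-state. -/
theorem stmt6 {N : Type*} (K : List (Act N)) (σ : Multiset N) :
    ((∃ δ, Steps (.block (seq K) σ []) (.block .done σ δ) ∧
        Rl δ = Rl K ∧ Wl δ = Wl K) ↔ Rl K ≤ σ) ∧
    (¬ Rl K ≤ σ → ∃ δ, Steps (.block (seq K) σ []) (.block .retry σ δ)) := by
  constructor
  · constructor
    · rintro ⟨δ, hsteps, hR, _⟩
      have hinv : PureInv σ (Ong.block (Expr.done (N := N)) σ δ) :=
        inv_steps hsteps ⟨seq K, [], rfl, noOr_seq K, by simp [Rl]⟩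
      obtain ⟨M', δ', heq, _, hle⟩ := hinv
      rw [Ong.block.injEq] at heq
      obtain ⟨_, _, rfl⟩ := heq
      rwa [hR] at hle
    · intro h
      refine ⟨K, ?_, rfl, rfl⟩
      have := steps_seq_done σ K [] (by simpa [Rl] using h)
      simpa using this
  · intro h
    exact steps_seq_retry σ K [] (by simp [Rl]) (by simpa [Rl] using h)
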